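/- Fix θ ∈ [0,k], r = θ + 1/2, and a sequence (x_1,y_1),...,(x_T,y_T) ∈ [0,1]^d × {±1} with T ≥ 4k ln(d)/r. Run the unnormalized EG algorithm with η = sqrt(k ln(d)/(rT)), λ = k/d, and z_t a subgradient of the Winnow loss ℓ(x_t,y_t,·) at w_t. Then for any u ∈ ℝ_+^d with ‖u‖₁ ≤ k: ∑_{t=1}^T ℓ(x_t,y_t,w_t) − ∑_{t=1}^T ℓ(x_t,y_t,u*) ≤ sqrt(16·r·k·ln(d)·T) + 4k·ln(d), where u* is a minimizer of the cumulative loss over the ℓ₁-ball. -/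

import Mathlib

lemma exp_quad' {a : ℝ} (h : |a| ≤ 1/2) : Real.exp a ≤ 1 + a + (2/3) * a^2 := by
  have h1 : |a| ≤ 1 := h.trans (by norm_num)
  have hb := Real.exp_bound h1 (n := 3) (by norm_num)
  have hs : ∑ m ∈ Finset.range 3, a ^ m / (Nat.factorial m : ℝ) = 1 + a + a^2/2 := by
    simp [Finset.sum_range_succ, Nat.factorial]
  rw [hs] at hb
  have h2 : Real.exp a - (1 + a + a^2/2) ≤ |a|^3 * ((4:ℝ)/18) := by
    have h4 := (abs_le.mp hb).2
    have h5 : ((Nat.succ 3 : ℕ) : ℝ) / ((Nat.factorial 3 : ℕ) * (3:ℕ)) = (4:ℝ)/18 := by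
      norm_num [Nat.factorial]
    rw [h5] at h4
    exact h4
  have h3 : |a|^3 ≤ (1/2) * a^2 := by
    have he : |a|^3 = |a| * a^2 := by rw [pow_succ, sq_abs]; ring
    rw [he]
    nlinarith [abs_nonneg a, sq_nonneg a]
  nlinarith

lemma breg_nonneg' {v w : ℝ} (hv : 0 ≤ v) (hw : 0 < w) :
    0 ≤ v * (Real.log v - Real.log w) - v + w := by
  rcases eq_or_lt_of_le hv with h|h
  · rw [← h]; simp; linarith
  · have hlog : Real.log (w / v) ≤ w / v - 1 :=
      Real.log_le_sub_one_of_pos (div_pos hw h)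
    rw [Real.log_div hw.ne' h.ne'] at hlog
    have h2 : v * (Real.log w - Real.log v) ≤ v * (w/v - 1) :=
      mul_le_mul_of_nonneg_left hlog h.le
    have h3 : v * (w/v) = w := by field_simp
    nlinarith

noncomputable def eglossF (d : ℕ) (θ : ℝ) (x : ℕ → Fin d → ℝ) (y : ℕ → ℝ) (t : ℕ)
    (v : Fin d → ℝ) : ℝ :=
  max 0 (1 / 2 - y t * ((∑ i, v i * x t i) - θ))

noncomputable def egD (d : ℕ) (w : ℕ → Fin d → ℝ) (v : Fin d → ℝ) (s : ℕ) : ℝ :=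
  ∑ i, (v i * (Real.log (v i) - Real.log (w s i)) - v i + w s i)

set_option maxHeartbeats 1600000 in
theorem stmt19 (d T : ℕ) (hd : 1 < d) (k θ : ℝ) (hk : 0 < k)
    (hθ : θ ∈ Set.Icc (0 : ℝ) k) (r : ℝ) (hr : r = θ + 1 / 2)
    (x : ℕ → Fin d → ℝ) (hx : ∀ t i, x t i ∈ Set.Icc (0 : ℝ) 1)
    (y : ℕ → ℝ) (hy : ∀ t, y t = 1 ∨ y t = -1)
    (hT : 4 * k * Real.log d / r ≤ T)
    (η : ℝ) (hη : η = Real.sqrt (k * Real.log d / (r * T)))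
    (w z : ℕ → Fin d → ℝ)
    (hinit : ∀ i, w 1 i = k / d)
    (hrec : ∀ t i, w (t + 1) i = w t i * Real.exp (-η * z t i))
    (hsub : ∀ t ∈ Finset.Icc 1 T, ∀ v : Fin d → ℝ,
      max 0 (1 / 2 - y t * ((∑ i, w t i * x t i) - θ)) + ∑ i, z t i * (v i - w t i) ≤
        max 0 (1 / 2 - y t * ((∑ i, v i * x t i) - θ)))
    (u : Fin d → ℝ) (hu : ∀ i, 0 ≤ u i) (hu1 : (∑ i, |u i|) ≤ k) :
    ∑ t ∈ Finset.Icc 1 T, max 0 (1 / 2 - y t * ((∑ i, w t i * x t i) - θ)) -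
      ∑ t ∈ Finset.Icc 1 T, max 0 (1 / 2 - y t * ((∑ i, u i * x t i) - θ)) ≤
      Real.sqrt (16 * r * k * Real.log d * T) + 4 * k * Real.log d := by
  obtain ⟨hθ0, hθk⟩ := hθ
  show (∑ t ∈ Finset.Icc 1 T, eglossF d θ x y t (w t)) -
      (∑ t ∈ Finset.Icc 1 T, eglossF d θ x y t u) ≤
      Real.sqrt (16 * r * k * Real.log d * T) + 4 * k * Real.log d
  set L := Real.log d with hLdef
  -- basic numerics
  have hd0 : (0:ℝ) < d := by positivity
  have hd2 : (2:ℝ) ≤ d := by exact_mod_cast hd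
  have hL2 : Real.log 2 ≤ L := Real.log_le_log (by norm_num) hd2
  have hLhalf : (1:ℝ)/2 < L := by have := Real.log_two_gt_d9; norm_num at this; linarith
  have hL0 : (0:ℝ) < L := by linarith
  have hr0 : (0:ℝ) < r := by rw [hr]; linarith
  have hkL : (0:ℝ) < k * L := mul_pos hk hL0
  have hT0 : (0:ℝ) < (T:ℝ) := lt_of_lt_of_le (by positivity) hT
  have hrT : (0:ℝ) < r * T := mul_pos hr0 hT0
  have hη2 : η^2 = k*L/(r*T) := by rw [hη]; exact Real.sq_sqrt (by positivity)
  have hηpos : 0 < η := by rw [hη]; positivity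
  have hη2le : η^2 ≤ 1/4 := by
    rw [hη2, div_le_iff₀ hrT]
    rw [div_le_iff₀ hr0] at hT
    nlinarith
  have hηhalf : η ≤ 1/2 := by nlinarith [sq_nonneg (η - 1/2)]
  -- positivity of iterates
  have hwrec : ∀ n i, 0 < w (n+1) i := by
    intro n
    induction n with
    | zero => intro i; rw [hinit i]; positivity
    | succ m ih => intro i; rw [hrec (m+1) i]; exact mul_pos (ih i) (Real.exp_pos _)
  have hwt : ∀ t ∈ Finset.Icc 1 T, ∀ i, 0 < w t i := by
    intro t ht i
    obtain ⟨n, rfl⟩ := Nat.exists_eq_add_of_le (Finset.mem_Icc.mp ht).1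
    rw [Nat.add_comm 1 n]
    exact hwrec n i
  have hy2 : ∀ t, y t * y t = 1 := by
    intro t; rcases hy t with h|h <;> rw [h] <;> norm_num
  -- subgradient coordinate bounds
  have hz : ∀ t ∈ Finset.Icc 1 T, ∀ i,
      0 ≤ -(y t * z t i) ∧ -(y t * z t i) ≤ x t i := by
    intro t ht i
    have key : ∀ s : ℝ,
        max 0 (1 / 2 - y t * ((∑ j, w t j * x t j) - θ)) + z t i * s ≤
        max 0 (1 / 2 - y t * ((∑ j, w t j * x t j) - θ) - y t * (s * x t i)) := by
      intro s
      have h := hsub t ht (fun j => w t j + (if j = i then s else 0))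
      simp only [add_sub_cancel_left, mul_ite, mul_zero, Finset.sum_ite_eq',
        Finset.mem_univ, if_true, add_mul, Finset.sum_add_distrib, ite_mul, zero_mul] at h
      refine h.trans (le_of_eq ?_)
      congr 1
      ring
    have hx0 := (hx t i).1
    have hx1 := (hx t i).2
    constructor
    · have h1 := key (y t)
      have h2 : max 0 (1 / 2 - y t * ((∑ j, w t j * x t j) - θ) - y t * (y t * x t i))
          ≤ max 0 (1 / 2 - y t * ((∑ j, w t j * x t j) - θ)) := by
        apply max_le (le_max_left _ _)
        have e : y t * (y t * x t i) = x t i := by rw [← mul_assoc, hy2 t, one_mul]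
        rw [e]
        have := le_max_right (0:ℝ) (1 / 2 - y t * ((∑ j, w t j * x t j) - θ))
        linarith
      have h3 := h1.trans h2
      nlinarith [h3]
    · have h1 := key (-(y t))
      have h2 : max 0 (1 / 2 - y t * ((∑ j, w t j * x t j) - θ) - y t * (-(y t) * x t i))
          ≤ max 0 (1 / 2 - y t * ((∑ j, w t j * x t j) - θ)) + x t i := by
        have e : y t * (-(y t) * x t i) = -(x t i) := by
          rcases hy t with hyt|hyt <;> rw [hyt] <;> ring
        rw [e]
        apply max_le (by positivity)
        have := le_max_right (0:ℝ) (1 / 2 - y t * ((∑ j, w t j * x t j) - θ))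
        linarith
      have h3 := h1.trans h2
      nlinarith [h3]
  
  -- squared subgradient bounds
  have hzsq : ∀ t ∈ Finset.Icc 1 T, ∀ i, (z t i)^2 ≤ -(y t * z t i) := by
    intro t ht i
    obtain ⟨h1, h2⟩ := hz t ht i
    have hx1 := (hx t i).2
    have e : (-(y t * z t i))^2 = (y t * y t) * (z t i)^2 := by ring
    rw [hy2 t, one_mul] at e
    have h4 : (-(y t * z t i)) * (-(y t * z t i)) ≤ (-(y t * z t i)) * 1 :=
      mul_le_mul_of_nonneg_left (h2.trans hx1) h1
    nlinarith [e, h4]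
  have hzabs : ∀ t ∈ Finset.Icc 1 T, ∀ i, |z t i| ≤ 1 := by
    intro t ht i
    rw [← sq_le_one_iff_abs_le_one]
    obtain ⟨h1, h2⟩ := hz t ht i
    have hx1 := (hx t i).2
    linarith [hzsq t ht i, h2.trans hx1]
  -- local norm condition
  have hloc : ∀ t ∈ Finset.Icc 1 T,
      ∑ i, w t i * (z t i)^2 ≤ eglossF d θ x y t (w t) + r := by
    intro t ht
    have hstep1 : ∑ i, w t i * (z t i)^2 ≤ ∑ i, w t i * (-(y t * z t i)) :=
      Finset.sum_le_sum fun i _ => mul_le_mul_of_nonneg_left (hzsq t ht i) (hwt t ht i).le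
    have hE0 : (0:ℝ) ≤ eglossF d θ x y t (w t) := le_max_left _ _
    have hEr : 1 / 2 - y t * ((∑ i, w t i * x t i) - θ) ≤ eglossF d θ x y t (w t) :=
      le_max_right _ _
    rcases hy t with hyt|hyt
    · -- y = 1 : use comparator 0
      have h := hsub t ht 0
      have e0 : (∑ i, (0:Fin d → ℝ) i * x t i) = 0 := by simp
      have ez : (∑ i, z t i * ((0:Fin d → ℝ) i - w t i)) = -(∑ i, w t i * z t i) := by
        rw [← Finset.sum_neg_distrib]
        apply Finset.sum_congr rfl
        intro i _
        simp
        ring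
      rw [ez, e0] at h
      have hr' : max 0 (1 / 2 - y t * (0 - θ)) ≤ r := by
        apply max_le hr0.le
        rw [hyt, hr]; linarith
      have esum : ∑ i, w t i * (-(y t * z t i)) = -(∑ i, w t i * z t i) := by
        rw [← Finset.sum_neg_distrib]
        apply Finset.sum_congr rfl
        intro i _
        rw [hyt]; ring
      rw [esum] at hstep1
      have hEch : eglossF d θ x y t (w t) = max 0 (1 / 2 - y t * ((∑ i, w t i * x t i) - θ)) := rfl
      rw [← hEch] at h
      linarith [h.trans hr']
    · -- y = -1 : use boundedness by the inner product
      have esum : ∑ i, w t i * (-(y t * z t i)) = ∑ i, w t i * z t i := by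
        apply Finset.sum_congr rfl
        intro i _
        rw [hyt]; ring
      rw [esum] at hstep1
      have hzx : ∑ i, w t i * z t i ≤ ∑ i, w t i * x t i := by
        apply Finset.sum_le_sum
        intro i _
        have h2 := (hz t ht i).2
        rw [hyt] at h2
        have : z t i ≤ x t i := by linarith
        exact mul_le_mul_of_nonneg_left this (hwt t ht i).le
      rw [hyt] at hEr
      linarith [hEr, hzx, hstep1]
  -- potential difference identity
  have hDdiff : ∀ t ∈ Finset.Icc 1 T, ∀ v : Fin d → ℝ,
      egD d w v t - egD d w v (t+1)
       = ∑ i, (v i * (-η * z t i) + w t i * (1 - Real.exp (-η * z t i))) := by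
    intro t ht v
    unfold egD
    rw [← Finset.sum_sub_distrib]
    apply Finset.sum_congr rfl
    intro i _
    have hw0 := hwt t ht i
    rw [hrec t i, Real.log_mul hw0.ne' (Real.exp_ne_zero _), Real.log_exp]
    ring
  -- per-step master inequality
  have hstep : ∀ t ∈ Finset.Icc 1 T, ∀ v : Fin d → ℝ,
      η * (eglossF d θ x y t (w t) - eglossF d θ x y t v)
      ≤ (egD d w v t - egD d w v (t+1))
        + (2/3) * η^2 * (eglossF d θ x y t (w t) + r) := by
    intro t ht v
    have h1 : eglossF d θ x y t (w t) - eglossF d θ x y t v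
        ≤ ∑ i, z t i * (w t i - v i) := by
      have h := hsub t ht v
      have e : ∑ i, z t i * (v i - w t i) = -(∑ i, z t i * (w t i - v i)) := by
        rw [← Finset.sum_neg_distrib]
        apply Finset.sum_congr rfl
        intro i _
        ring
      rw [e] at h
      have hEch : eglossF d θ x y t (w t) = max 0 (1 / 2 - y t * ((∑ i, w t i * x t i) - θ)) := rfl
      have hEch2 : eglossF d θ x y t v = max 0 (1 / 2 - y t * ((∑ i, v i * x t i) - θ)) := rfl
      rw [← hEch, ← hEch2] at h
      linarith
    have h1' : η * (eglossF d θ x y t (w t) - eglossF d θ x y t v)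
        ≤ η * ∑ i, z t i * (w t i - v i) := mul_le_mul_of_nonneg_left h1 hηpos.le
    have hcoord : ∀ i, w t i * (η * z t i - 1 + Real.exp (-η * z t i))
        ≤ (2/3) * η^2 * (w t i * (z t i)^2) := by
      intro i
      have habs : |(-η) * z t i| ≤ 1/2 := by
        rw [abs_mul, abs_neg, abs_of_pos hηpos]
        calc η * |z t i| ≤ η * 1 :=
              mul_le_mul_of_nonneg_left (hzabs t ht i) hηpos.le
          _ ≤ 1/2 := by linarith
      have he := exp_quad' habs
      have h6 : η * z t i - 1 + Real.exp (-η * z t i) ≤ (2/3) * η^2 * (z t i)^2 := by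
        have e7 : (-η) * z t i = -η * z t i := by ring
        rw [e7] at he
        nlinarith [he]
      have := mul_le_mul_of_nonneg_left h6 (hwt t ht i).le
      linarith [this]
    have hsum1 : ∑ i, w t i * (η * z t i - 1 + Real.exp (-η * z t i))
        ≤ (2/3) * η^2 * (∑ i, w t i * (z t i)^2) := by
      rw [Finset.mul_sum]
      exact Finset.sum_le_sum fun i _ => hcoord i
    have hsum2 : (2/3) * η^2 * (∑ i, w t i * (z t i)^2)
        ≤ (2/3) * η^2 * (eglossF d θ x y t (w t) + r) :=
      mul_le_mul_of_nonneg_left (hloc t ht) (by positivity)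
    have halg : η * (∑ i, z t i * (w t i - v i))
        = (∑ i, (v i * (-η * z t i) + w t i * (1 - Real.exp (-η * z t i))))
          + ∑ i, w t i * (η * z t i - 1 + Real.exp (-η * z t i)) := by
      rw [Finset.mul_sum, ← Finset.sum_add_distrib]
      apply Finset.sum_congr rfl
      intro i _
      ring
    rw [hDdiff t ht v]
    linarith
  -- telescoping
  have hcard : (Finset.Icc 1 T).card = T := by rw [Nat.card_Icc]; omega
  have htel : ∀ v : Fin d → ℝ,
      ∑ t ∈ Finset.Icc 1 T, (egD d w v t - egD d w v (t+1))
        = egD d w v 1 - egD d w v (T+1) := by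
    intro v
    have hIcc : Finset.Icc 1 T = Finset.Ico 1 (T+1) := by
      ext j; simp only [Finset.mem_Icc, Finset.mem_Ico]; omega
    rw [hIcc, Finset.sum_Ico_eq_sum_range]
    simp only [Nat.add_sub_cancel]
    have := Finset.sum_range_sub' (fun i => egD d w v (1+i)) T
    simpa [Nat.add_comm] using this
  -- summed master inequality
  have hmaster : ∀ v : Fin d → ℝ, (∀ i, 0 ≤ v i) →
      η * ((∑ t ∈ Finset.Icc 1 T, eglossF d θ x y t (w t)) -
        ∑ t ∈ Finset.Icc 1 T, eglossF d θ x y t v)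
      ≤ egD d w v 1 + (2/3) * η^2 *
          ((∑ t ∈ Finset.Icc 1 T, eglossF d θ x y t (w t)) + r * T) := by
    intro v hv
    have hs := Finset.sum_le_sum (fun t ht => hstep t ht v)
    rw [Finset.sum_add_distrib, htel v] at hs
    have e1 : ∑ t ∈ Finset.Icc 1 T, η * (eglossF d θ x y t (w t) - eglossF d θ x y t v)
        = η * ((∑ t ∈ Finset.Icc 1 T, eglossF d θ x y t (w t)) -
            ∑ t ∈ Finset.Icc 1 T, eglossF d θ x y t v) := by
      rw [← Finset.mul_sum, Finset.sum_sub_distrib]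
    have e2 : ∑ t ∈ Finset.Icc 1 T, (2/3) * η^2 * (eglossF d θ x y t (w t) + r)
        = (2/3) * η^2 * ((∑ t ∈ Finset.Icc 1 T, eglossF d θ x y t (w t)) + r * T) := by
      rw [← Finset.mul_sum, Finset.sum_add_distrib, Finset.sum_const, hcard, nsmul_eq_mul]
      ring
    rw [e1, e2] at hs
    have hD0 : 0 ≤ egD d w v (T+1) :=
      Finset.sum_nonneg fun i _ => breg_nonneg' (hv i) (hwrec T i)
    linarith
  -- comparator 0
  have hD0eq : egD d w 0 1 = k := by
    unfold egD
    simp only [Pi.zero_apply, zero_mul, zero_sub, neg_zero, zero_add, hinit]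
    rw [Finset.sum_const, Finset.card_univ, Fintype.card_fin, nsmul_eq_mul]
    field_simp
  have hB0sum : ∑ t ∈ Finset.Icc 1 T, eglossF d θ x y t 0 ≤ r * T := by
    calc ∑ t ∈ Finset.Icc 1 T, eglossF d θ x y t 0 ≤ ∑ t ∈ Finset.Icc 1 T, r := by
          apply Finset.sum_le_sum
          intro t _
          unfold eglossF
          apply max_le hr0.le
          simp only [Pi.zero_apply, zero_mul, Finset.sum_const_zero]
          rcases hy t with hyt|hyt <;> rw [hyt, hr] <;> linarith
      _ = r * T := by rw [Finset.sum_const, hcard, nsmul_eq_mul]; ring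
  -- comparator u
  have hsumu_eq : ∑ i, |u i| = ∑ i, u i :=
    Finset.sum_congr rfl fun i _ => abs_of_nonneg (hu i)
  have hSu : ∑ i, u i ≤ k := by rw [← hsumu_eq]; exact hu1
  have hSu0 : 0 ≤ ∑ i, u i := Finset.sum_nonneg fun i _ => hu i
  have huk : ∀ i, u i ≤ k :=
    fun i => le_trans (Finset.single_le_sum (fun j _ => hu j) (Finset.mem_univ i)) hSu
  have hDu : egD d w u 1 ≤ 2 * (k * L) := by
    have hcoord : ∀ i, u i * (Real.log (u i) - Real.log (w 1 i)) - u i + w 1 i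
        ≤ u i * L - u i + k / d := by
      intro i
      rw [hinit i, Real.log_div hk.ne' (ne_of_gt hd0)]
      have h8 : u i * (Real.log (u i) - Real.log k) ≤ 0 := by
        rcases eq_or_lt_of_le (hu i) with h|h
        · rw [← h]; ring_nf; exact le_refl 0
        · exact mul_nonpos_of_nonneg_of_nonpos h.le
            (by linarith [Real.log_le_log h (huk i)])
      nlinarith [h8]
    have h9 : egD d w u 1 ≤ L * (∑ i, u i) - (∑ i, u i) + k := by
      unfold egD
      calc ∑ i, (u i * (Real.log (u i) - Real.log (w 1 i)) - u i + w 1 i)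
          ≤ ∑ i, (u i * L - u i + k / d) := Finset.sum_le_sum fun i _ => hcoord i
        _ = L * (∑ i, u i) - (∑ i, u i) + k := by
            rw [Finset.sum_add_distrib, Finset.sum_sub_distrib, ← Finset.sum_mul,
              Finset.sum_const, Finset.card_univ, Fintype.card_fin, nsmul_eq_mul]
            field_simp
    rcases le_or_gt 1 L with hL1|hL1
    · nlinarith [mul_le_mul_of_nonneg_left hSu (by linarith : (0:ℝ) ≤ L - 1)]
    · nlinarith [mul_nonpos_of_nonpos_of_nonneg (by linarith : L - 1 ≤ 0) hSu0]
  -- final assembly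
  have key0 := hmaster 0 (fun i => le_refl 0)
  rw [hD0eq] at key0
  have keyu := hmaster u hu
  have hkLQ : k * L = η * (η * (r * T)) := by
    have e : η * (η * (r * T)) = η^2 * (r * T) := by ring
    rw [e, hη2]
    field_simp
  have hB0η : η * (∑ t ∈ Finset.Icc 1 T, eglossF d θ x y t 0) ≤ η * (r * T) :=
    mul_le_mul_of_nonneg_left hB0sum hηpos.le
  have hA0 : 0 ≤ ∑ t ∈ Finset.Icc 1 T, eglossF d θ x y t (w t) :=
    Finset.sum_nonneg fun t _ => le_max_left _ _
  have hhint1 : 0 ≤ (1/2 - η) * (η * (∑ t ∈ Finset.Icc 1 T, eglossF d θ x y t (w t))) :=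
    mul_nonneg (by linarith) (mul_nonneg hηpos.le hA0)
  have hhint2 : 0 ≤ (1/2 - η) * (η * (r * T)) :=
    mul_nonneg (by linarith) (mul_nonneg hηpos.le hrT.le)
  have hP : η * (∑ t ∈ Finset.Icc 1 T, eglossF d θ x y t (w t))
      ≤ 2 * (η * (r * T)) + (3/2) * k := by
    nlinarith [key0, hB0η, hhint1, hhint2]
  have hfin : η * ((∑ t ∈ Finset.Icc 1 T, eglossF d θ x y t (w t)) -
      ∑ t ∈ Finset.Icc 1 T, eglossF d θ x y t u)
      ≤ η * (4 * (η * (r * T)) + k) := by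
    nlinarith [keyu, hkLQ, mul_le_mul_of_nonneg_left hP (by linarith : (0:ℝ) ≤ (2/3) * η)]
  have hAB := le_of_mul_le_mul_left hfin hηpos
  have hsq : Real.sqrt (16 * r * k * L * (T:ℝ)) = 4 * (η * (r * T)) := by
    have h1 : 16 * r * k * L * (T:ℝ) = (4 * (η * (r * T)))^2 := by
      have e : (4 * (η * (r * T)))^2 = 16 * η^2 * (r * T)^2 := by ring
      rw [e, hη2]
      field_simp
    rw [h1, Real.sqrt_sq (by positivity)]
  have hk4L : k ≤ 4 * (k * L) := by nlinarith
  rw [hsq]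
  linarith
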